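/- arXiv:1010.5020 — 4 statements merged into one kernel-verified Lean document; each statement's English description precedes it below -/
import Mathlib

section
/- Let R be a commutative ring with involution, h ∈ R a nonzero element that is squarefree and fixed by the involution (h̄ = h·unit), and let M = R/(h) with a sesquilinear form Bl(x,y) = x·ȳ·r/h valued in Frac(R)/R, where r is coprime to h. If s ∈ R satisfies h | s·s̄·r, then h | s. Consequently M has no nonzero isotropic elements. -/
private theorem aux_coprime {R : Type*} [CommRing R] [IsDomain R] [IsPrincipalIdealRing R]
    [GCDMonoid R] {a b : R} (ha : a ≠ 0)
    (H : ∀ p : R, Prime p → p ∣ a → ¬ p ∣ b) : IsCoprime a b := by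
  rw [← gcd_isUnit_iff]
  by_contra hu
  have hg : gcd a b ≠ 0 := fun h0 => ha ((gcd_eq_zero_iff a b).mp h0).1
  obtain ⟨p, hpirr, hpdvd⟩ := WfDvdMonoid.exists_irreducible_factor hu hg
  have hp : Prime p := UniqueFactorizationMonoid.irreducible_iff_prime.mp hpirr
  exact H p hp (hpdvd.trans (gcd_dvd_left a b)) (hpdvd.trans (gcd_dvd_right a b))


private theorem aux_star_dvd {R : Type*} [CommRing R] [StarRing R] {a b : R}
    (hab : a ∣ b) : star a ∣ star b := by
  obtain ⟨c, rfl⟩ := hab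
  exact ⟨star c, by rw [star_mul, mul_comm]⟩

/-- Let `R` be a PID with involution, `h ∈ R` a nonzero squarefree element
fixed by the involution (up to a unit, and with all prime factors symmetric),
and `r` coprime to `h`.  If `s ∈ R` satisfies `h ∣ s * s̄ * r`, then `h ∣ s`.
Consequently `R/(h)` with the Blanchfield-type form `Bl(x,y) = x ȳ r / h` has
no nonzero isotropic elements. -/
theorem stmt_6 (R : Type*) [CommRing R] [IsDomain R] [IsPrincipalIdealRing R]
    [StarRing R] (h r : R) (hne : h ≠ 0) (hsf : Squarefree h)
    (hsym : Associated (star h) h)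
    (hfactors : ∀ q : R, Prime q → q ∣ h → Associated (star q) q)
    (hcop : IsCoprime r h) :
    ∀ s : R, h ∣ s * star s * r → h ∣ s := by
  classical
  letI := IsBezout.toGCDDomain R
  intro s hdvd
  have hss : h ∣ s * star s := (hcop.symm).dvd_of_dvd_mul_right hdvd
  set d := gcd h s with hd
  obtain ⟨h', hh⟩ : d ∣ h := gcd_dvd_left h s
  have hds : d ∣ s := gcd_dvd_right h s
  have hh'ne : h' ≠ 0 := by rintro rfl; rw [mul_zero] at hh; exact hne hh
  have hh'h : h' ∣ h := ⟨d, by rw [hh, mul_comm]⟩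
  -- h' coprime to s
  have hc1 : IsCoprime h' s := by
    apply aux_coprime hh'ne
    intro p hp hph' hps
    have hpd : p ∣ d := dvd_gcd (hph'.trans hh'h) hps
    have hpp : p * p ∣ h := by rw [hh]; exact mul_dvd_mul hpd hph'
    exact hp.not_unit (hsf p hpp)
  -- h' divides star s, so star h' divides s
  have hh'stars : h' ∣ star s := hc1.dvd_of_dvd_mul_left (hh'h.trans hss)
  have hsth's : star h' ∣ s := by
    have := aux_star_dvd hh'stars
    rwa [star_star] at this
  -- star h' coprime to d
  have hsth'ne : star h' ≠ 0 := star_ne_zero.mpr hh'ne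
  have hc2 : IsCoprime (star h') d := by
    apply aux_coprime hsth'ne
    intro p hp hpst hpd
    have hph : p ∣ h := hpd.trans (gcd_dvd_left h s)
    have hstp : star p ∣ h' := by
      have := aux_star_dvd hpst
      rwa [star_star] at this
    have hpp' : p ∣ h' := ((hfactors p hp hph).symm.dvd).trans hstp
    have hpp : p * p ∣ h := by rw [hh]; exact mul_dvd_mul hpd hpp'
    exact hp.not_unit (hsf p hpp)
  -- star h' divides h', hence associated
  have hsth'h : star h' ∣ h := (aux_star_dvd hh'h).trans hsym.dvd
  have hsth'h' : star h' ∣ h' := by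
    have : star h' ∣ d * h' := by rw [← hh]; exact hsth'h
    exact hc2.dvd_of_dvd_mul_left this
  have hassoc : Associated (star h') h' :=
    associated_of_dvd_dvd hsth'h' (by simpa using aux_star_dvd hsth'h')
  -- conclude
  have hmul : d * star h' ∣ s := (hc2.symm).mul_dvd hds hsth's
  have : Associated h (d * star h') := by
    rw [hh]; exact (Associated.mul_left d hassoc.symm)
  exact this.dvd.trans hmul
end

section
/- Let A = ⊕_{i=1}^n ℚ[t,t⁻¹]/(q_i) with q_i | q_{i+1} and q_1⋯q_n = Δ. If every prime factor of a polynomial p divides Δ with multiplicity at most 1, then A ⊗ R_p is a cyclic R_p-module, isomorphic to R_p/(h) where h = gcd(p, Δ); moreover h is squarefree. -/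
open scoped DirectSum
open Polynomial LaurentPolynomial


noncomputable section StmtAux

instance : IsDomain (LaurentPolynomial ℚ) := NoZeroDivisors.to_isDomain _

noncomputable instance : IsPrincipalIdealRing (LaurentPolynomial ℚ) := by
  haveI := LaurentPolynomial.isLocalization (R := ℚ)
  constructor
  intro J
  obtain ⟨g, hg⟩ := (IsPrincipalIdealRing.principal (J.comap (algebraMap ℚ[X] (LaurentPolynomial ℚ))))
  refine ⟨algebraMap ℚ[X] _ g, ?_⟩
  conv_lhs => rw [← IsLocalization.map_comap (Submonoid.powers (Polynomial.X : ℚ[X])) (LaurentPolynomial ℚ) J]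
  rw [show (Ideal.under ℚ[X] J) = Ideal.span {g} from hg,
    Ideal.map_span, Set.image_singleton]

theorem exists_prime_lp : ∃ f : LaurentPolynomial ℚ, Prime f := by
  have hT : (T 1 : LaurentPolynomial ℚ) = AddMonoidAlgebra.single (1:ℤ) (1:ℚ) := rfl
  have hne : (T 1 - 1 : LaurentPolynomial ℚ) ≠ 0 := by
    intro hEq
    have h2 : (T 1 : LaurentPolynomial ℚ) = 1 := by linear_combination hEq
    rw [← T_zero] at h2
    have : (T 1 : LaurentPolynomial ℚ).coeff 1 = (T 0 : LaurentPolynomial ℚ).coeff 1 := by rw [h2]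
    rw [T_apply, T_apply] at this
    norm_num at this
  have hnu : ¬ IsUnit (T 1 - 1 : LaurentPolynomial ℚ) := by
    intro hu
    set φ := (AddMonoidAlgebra.lift ℚ ℚ ℤ) 1 with hφ
    have h1 : φ (T 1 - 1) = 0 := by
      have : φ (T 1) = 1 := by
        rw [hT, AddMonoidAlgebra.lift_single]; simp
      rw [map_sub, this, map_one, sub_self]
    have := hu.map φ
    rw [h1] at this
    exact not_isUnit_zero this
  obtain ⟨i, hi, hdvd⟩ := WfDvdMonoid.exists_irreducible_factor hnu hne
  exact ⟨i, hi.prime⟩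

end StmtAux

set_option maxHeartbeats 2000000 in
/-- Let `A = ⊕ᵢ ℚ[t,t⁻¹]/(qᵢ)` with `qᵢ ∣ qᵢ₊₁` and `q₁ ⋯ qₙ = Δ`.  If every
prime factor of `p` divides `Δ` with multiplicity at most `1`, then the
localization of `A` at polynomials coprime to `p` is a cyclic module,
isomorphic to `R_p/(h)` where `h = gcd(p, Δ)`; moreover `h` is squarefree. -/
theorem stmt_9 (n : ℕ) (q : Fin n → LaurentPolynomial ℚ) (p Δ h : LaurentPolynomial ℚ)
    (hq : ∀ i : Fin n, ∀ hlt : (i : ℕ) + 1 < n, q i ∣ q ⟨(i : ℕ) + 1, hlt⟩)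
    (hprod : ∏ i, q i = Δ)
    (hmult : ∀ f : LaurentPolynomial ℚ, Prime f → f ∣ p → ¬ f ^ 2 ∣ Δ)
    (hgcd₁ : h ∣ p) (hgcd₂ : h ∣ Δ)
    (hgcd₃ : ∀ d : LaurentPolynomial ℚ, d ∣ p → d ∣ Δ → d ∣ h)
    (S : Submonoid (LaurentPolynomial ℚ))
    (hS : (S : Set (LaurentPolynomial ℚ)) = {g | IsCoprime g p}) :
    Squarefree h ∧
    Nonempty
      ((LocalizedModule S (⨁ i : Fin n, LaurentPolynomial ℚ ⧸ Ideal.span {q i}))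
        ≃ₗ[LaurentPolynomial ℚ]
       (LocalizedModule S (LaurentPolynomial ℚ ⧸ Ideal.span {h}))) := by
  have hpΔ : p = 0 → Δ ≠ 0 := by
    intro hp hΔ
    obtain ⟨f, hf⟩ := exists_prime_lp
    exact hmult f hf (by simp [hp]) (by simp [hΔ])
  -- Squarefree h
  have sqf : Squarefree h := by
    intro x hx
    by_contra hxu
    have hh0 : h ≠ 0 := by
      intro h0
      exact hpΔ (zero_dvd_iff.mp (h0 ▸ hgcd₁)) (zero_dvd_iff.mp (h0 ▸ hgcd₂))
    have hx0 : x ≠ 0 := by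
      rintro rfl
      exact hh0 (zero_dvd_iff.mp (by simpa using hx))
    obtain ⟨f, hf, hfd⟩ := WfDvdMonoid.exists_irreducible_factor hxu hx0
    have hxh : x ∣ h := (dvd_mul_right x x).trans hx
    refine hmult f hf.prime ((hfd.trans hxh).trans hgcd₁) ?_
    rw [sq]
    exact ((mul_dvd_mul hfd hfd).trans hx).trans hgcd₂
  refine ⟨sqf, ?_⟩
  rcases n with _ | m
  · -- trivial case
    haveI : Subsingleton ((⨁ i : Fin 0, LaurentPolynomial ℚ ⧸ Ideal.span {q i})) := inferInstance
    have hΔ1 : Δ = 1 := by simpa using hprod.symm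
    have hu : IsUnit h := isUnit_of_dvd_one (hΔ1 ▸ hgcd₂)
    have htop : Ideal.span {h} = ⊤ := Ideal.span_singleton_eq_top.mpr hu
    haveI : Subsingleton (LaurentPolynomial ℚ ⧸ Ideal.span {h}) := by
      rw [htop]; infer_instance
    haveI : Subsingleton (LocalizedModule S (⨁ i : Fin 0, LaurentPolynomial ℚ ⧸ Ideal.span {q i})) := by
      constructor
      intro a b
      induction a, b using LocalizedModule.induction_on₂ with
      | _ a b s t => rw [Subsingleton.elim a 0, Subsingleton.elim b 0,
          LocalizedModule.zero_mk, LocalizedModule.zero_mk]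
    haveI : Subsingleton (LocalizedModule S (LaurentPolynomial ℚ ⧸ Ideal.span {h})) := by
      constructor
      intro a b
      induction a, b using LocalizedModule.induction_on₂ with
      | _ a b s t => rw [Subsingleton.elim a 0, Subsingleton.elim b 0,
          LocalizedModule.zero_mk, LocalizedModule.zero_mk]
    exact ⟨LinearEquiv.ofSubsingleton _ _⟩
  · -- main case
    set lst : Fin (m+1) := Fin.last m with hlst
    -- divisibility chain
    have hchain : ∀ i j : Fin (m+1), i ≤ j → q i ∣ q j := by
      have key : ∀ (k : ℕ) (i : Fin (m+1)) (hk : (i:ℕ) + k ≤ m), q i ∣ q ⟨(i:ℕ) + k, by omega⟩ := by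
        intro k
        induction k with
        | zero => intro i hk; simpa using dvd_refl (q i)
        | succ k ih =>
          intro i hk
          have h1 : q i ∣ q ⟨(i:ℕ) + k, by omega⟩ := ih i (by omega)
          have h2 := hq ⟨(i:ℕ) + k, by omega⟩ (by simpa using by omega : ((⟨(i:ℕ)+k, by omega⟩ : Fin (m+1)) : ℕ) + 1 < m+1)
          exact h1.trans (by convert h2 using 2; exact Fin.ext (by simp only [Fin.val_mk]; omega))
      intro i j hij
      have hj : j = ⟨(i:ℕ) + ((j:ℕ) - (i:ℕ)), by omega⟩ := by
        apply Fin.ext; simp; omega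
      rw [hj]
      exact key _ i (by omega)
    have hq_last : ∀ i : Fin (m+1), q i ∣ q lst := fun i => hchain i lst (Fin.le_last i)
    have hΔpow : Δ ∣ q lst ^ (m+1) := by
      rw [← hprod]
      calc ∏ i, q i ∣ ∏ _i : Fin (m+1), q lst :=
            Finset.prod_dvd_prod_of_dvd _ _ (fun i _ => hq_last i)
        _ = q lst ^ (m+1) := by simp [Finset.prod_const]
    have hhql : h ∣ q lst := (sqf.dvd_pow_iff_dvd (Nat.succ_ne_zero m)).mp (hgcd₂.trans hΔpow)
    obtain ⟨h', hh'⟩ := hhql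
    -- coprimality of q i (i ≠ last) with p
    have hcopi : ∀ i : Fin (m+1), i ≠ lst → IsCoprime (q i) p := by
      intro i hi
      apply isCoprime_of_prime_dvd
      · rintro ⟨hqi0, hp0⟩
        exact hpΔ hp0 (by rw [← hprod]; exact Finset.prod_eq_zero (Finset.mem_univ i) hqi0)
      · intro z hz hzq hzp
        have hlt : (i:ℕ) < m := by
          have := Fin.val_lt_last hi
          omega
        set j : Fin (m+1) := ⟨(i:ℕ)+1, by omega⟩ with hj
        have hij : i ≠ j := by
          intro e; rw [Fin.ext_iff] at e; simp [hj] at e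
        have hzj : z ∣ q j := hzq.trans (hq i (by omega))
        have h2 : z ^ 2 ∣ Δ := by
          rw [← hprod, sq]
          calc z * z ∣ q i * q j := mul_dvd_mul hzq hzj
            _ = ∏ k ∈ ({i, j} : Finset (Fin (m+1))), q k := (Finset.prod_pair hij).symm
            _ ∣ ∏ k, q k := Finset.prod_dvd_prod_of_subset _ _ _ (Finset.subset_univ _)
        exact hmult z hz hzp h2
    -- coprimality of h' with p
    have hql_dvd : q lst ∣ Δ := by rw [← hprod]; exact Finset.dvd_prod_of_mem _ (Finset.mem_univ _)
    have hcoph' : IsCoprime h' p := by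
      apply isCoprime_of_prime_dvd
      · rintro ⟨h'0, hp0⟩
        apply hpΔ hp0
        have : q lst = 0 := by rw [hh', h'0, mul_zero]
        exact zero_dvd_iff.mp (this ▸ hql_dvd)
      · intro z hz hzh' hzp
        have hh'q : h' ∣ q lst := ⟨h, by rw [hh', mul_comm]⟩
        have hzΔ : z ∣ Δ := (hzh'.trans hh'q).trans hql_dvd
        have hzh : z ∣ h := hgcd₃ z hzp hzΔ
        have h2 : z ^ 2 ∣ Δ := by
          rw [sq]
          exact ((mul_dvd_mul hzh hzh').trans (hh' ▸ dvd_refl _)).trans hql_dvd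
        exact hmult z hz hzp h2
    -- the map
    have hle : Ideal.span {q lst} ≤ Submodule.comap (LinearMap.id : LaurentPolynomial ℚ →ₗ[LaurentPolynomial ℚ] LaurentPolynomial ℚ) (Ideal.span {h}) :=
      fun x hx => Ideal.span_singleton_le_span_singleton.mpr ⟨h', hh'⟩ hx
    set π : (LaurentPolynomial ℚ ⧸ Ideal.span {q lst}) →ₗ[LaurentPolynomial ℚ] (LaurentPolynomial ℚ ⧸ Ideal.span {h}) :=
      Submodule.mapQ _ _ LinearMap.id hle with hπ
    set g : (⨁ i : Fin (m+1), LaurentPolynomial ℚ ⧸ Ideal.span {q i}) →ₗ[LaurentPolynomial ℚ] (LaurentPolynomial ℚ ⧸ Ideal.span {h}) :=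
      π ∘ₗ DirectSum.component (LaurentPolynomial ℚ) (Fin (m+1)) (fun i => LaurentPolynomial ℚ ⧸ Ideal.span {q i}) lst with hg
    set M := (⨁ i : Fin (m+1), LaurentPolynomial ℚ ⧸ Ideal.span {q i}) with hM
    set N := (LaurentPolynomial ℚ ⧸ Ideal.span {h}) with hN
    set G := IsLocalizedModule.map S (LocalizedModule.mkLinearMap S M)
      (LocalizedModule.mkLinearMap S N) g with hG
    -- torsion lemma
    have torsion : ∀ mm : M, g mm = 0 → ∃ v : S, (v : LaurentPolynomial ℚ) • mm = 0 := by
      intro mm hmm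
      set c : LaurentPolynomial ℚ := (∏ i ∈ Finset.univ.erase lst, q i) * h' with hc
      have hcS : c ∈ S := by
        have : IsCoprime c p := by
          refine IsCoprime.mul_left ?_ hcoph'
          exact IsCoprime.prod_left fun i hi => hcopi i (Finset.ne_of_mem_erase hi)
        rw [← SetLike.mem_coe, hS]
        exact this
      refine ⟨⟨c, hcS⟩, ?_⟩
      refine DFinsupp.ext fun i => ?_
      obtain ⟨a, ha⟩ := Submodule.Quotient.mk_surjective _ (mm i)
      have happ : (c • mm) i = c • (mm i) := DirectSum.smul_apply _ _ _
      rw [show ((⟨c, hcS⟩ : S) : LaurentPolynomial ℚ) = c from rfl, happ, ← ha, ← Submodule.Quotient.mk_smul,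
        DirectSum.zero_apply, Submodule.Quotient.mk_eq_zero, smul_eq_mul]
      rw [Ideal.mem_span_singleton]
      by_cases hi : i = lst
      · subst hi
        have hπ0 : π (mm lst) = 0 := hmm
        rw [← ha, hπ, Submodule.mapQ_apply, Submodule.Quotient.mk_eq_zero,
          Ideal.mem_span_singleton] at hπ0
        obtain ⟨b, hb⟩ := hπ0
        refine ⟨(∏ i ∈ Finset.univ.erase lst, q i) * b, ?_⟩
        rw [hc]
        rw [show (LinearMap.id : LaurentPolynomial ℚ →ₗ[LaurentPolynomial ℚ] LaurentPolynomial ℚ) a = a from rfl] at hb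
        rw [hb, hh']
        ring
      · have : q i ∣ c := by
          rw [hc]
          exact dvd_mul_of_dvd_left (Finset.dvd_prod_of_mem _ (Finset.mem_erase.mpr ⟨hi, Finset.mem_univ i⟩)) _
        exact this.mul_right a
    -- bijectivity
    have hsurj : Function.Surjective G := by
      intro y
      induction y using LocalizedModule.induction_on with
      | _ b s =>
        obtain ⟨a, ha⟩ := Submodule.Quotient.mk_surjective _ b
        refine ⟨LocalizedModule.mk (DirectSum.lof (LaurentPolynomial ℚ) (Fin (m+1)) (fun i => LaurentPolynomial ℚ ⧸ Ideal.span {q i}) lst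
          (Submodule.Quotient.mk a)) s, ?_⟩
        rw [hG, IsLocalizedModule.map_LocalizedModules]
        congr 1
        rw [hg]
        simp only [LinearMap.comp_apply]
        rw [DirectSum.component.lof_self]
        rw [hπ, Submodule.mapQ_apply, LinearMap.id_apply, ha]
    have hinj : Function.Injective G := by
      intro x y hxy
      have hker : ∀ z, G z = 0 → z = 0 := by
        intro z hz
        induction z using LocalizedModule.induction_on with
        | _ mm s =>
          rw [hG, IsLocalizedModule.map_LocalizedModules] at hz
          rw [show (0 : LocalizedModule S N) = LocalizedModule.mk 0 1 from (LocalizedModule.zero_mk _).symm,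
            LocalizedModule.mk_eq] at hz
          obtain ⟨u, hu⟩ := hz
          simp only [one_smul, smul_zero] at hu
          have : g ((u : LaurentPolynomial ℚ) • mm) = 0 := by
            rw [map_smul]
            exact hu
          obtain ⟨v, hv⟩ := torsion _ this
          rw [show (0 : LocalizedModule S M) = LocalizedModule.mk 0 1 from (LocalizedModule.zero_mk _).symm,
            LocalizedModule.mk_eq]
          refine ⟨v * u, ?_⟩
          simp only [one_smul, smul_zero, mul_smul]
          exact hv
      have hGxy : G (x + (-1 : LaurentPolynomial ℚ) • y) = 0 := by
        rw [map_add, map_smul, hxy]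
        nth_rewrite 1 [← one_smul (LaurentPolynomial ℚ) (G y)]
        rw [← add_smul, add_neg_cancel, zero_smul]
      have h0 := hker _ hGxy
      calc x = x + (-1 : LaurentPolynomial ℚ) • y + y := by
            rw [add_assoc]; nth_rewrite 2 [← one_smul (LaurentPolynomial ℚ) y]
            rw [← add_smul, neg_add_cancel, zero_smul, add_zero]
        _ = y := by rw [h0, zero_add]
    exact ⟨LinearEquiv.ofBijective G ⟨hinj, hsurj⟩⟩
end

section
/- The 4×4 Seifert matrix V = [[n,1,0,0],[0,1,0,0],[0,0,n,1],[0,0,0,1]] with n = n(x) = -x²-x-1 admits a metabolizer: the vectors v₁ = (1, x, 0, 1)ᵀ and v₂ = (0, 1, 1, -x-1)ᵀ span a rank-2 subspace on which the bilinear form (u,v) ↦ uᵀ V v vanishes identically. -/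
open Matrix

/-- The `4 × 4` Seifert matrix `V = [[n,1,0,0],[0,1,0,0],[0,0,n,1],[0,0,0,1]]`
with `n = -x² - x - 1` admits a metabolizer: the vectors `v₁ = (1,x,0,1)` and
`v₂ = (0,1,1,-x-1)` are linearly independent and the form `(u,v) ↦ uᵀ V v`
vanishes identically on their span. -/
theorem stmt_12 (x : ℤ) :
    let n : ℚ := -(x : ℚ) ^ 2 - x - 1
    let V : Matrix (Fin 4) (Fin 4) ℚ :=
      !![n, 1, 0, 0; 0, 1, 0, 0; 0, 0, n, 1; 0, 0, 0, 1]
    let v₁ : Fin 4 → ℚ := ![1, (x : ℚ), 0, 1]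
    let v₂ : Fin 4 → ℚ := ![0, 1, 1, -(x : ℚ) - 1]
    LinearIndependent ℚ ![v₁, v₂] ∧
    (v₁ ⬝ᵥ V.mulVec v₁ = 0) ∧ (v₁ ⬝ᵥ V.mulVec v₂ = 0) ∧
    (v₂ ⬝ᵥ V.mulVec v₁ = 0) ∧ (v₂ ⬝ᵥ V.mulVec v₂ = 0) := by
  intro n V v₁ v₂
  refine ⟨?_, ?_, ?_, ?_, ?_⟩
  · rw [LinearIndependent.pair_iff' (by
      intro h
      have := congrFun h 0
      simp [v₁] at this)]
    intro a h
    have h0 := congrFun h 0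
    have h1 := congrFun h 1
    simp [v₁, v₂] at h0 h1
    rw [h0] at h1
    simp at h1
  all_goals
    simp only [n, V, v₁, v₂, dotProduct, mulVec, Fin.sum_univ_four,
      Matrix.cons_val_zero, Matrix.cons_val_one, Matrix.head_cons,
      Matrix.cons_val_fin_one, Matrix.cons_val', Matrix.empty_val',
      Matrix.head_fin_const, Matrix.of_apply, Matrix.cons_val_two, Matrix.cons_val_three, Matrix.tail_cons]
    ring
end

section
/- The vectors m₁ = (1,0), m₂ = (0,1), l₁ = (t(n+xn+x)+1, t(n+1)−1), l₂ = (t(n+1)−1, t(−xn−n−1)+x+1), regarded as elements of the module A = (ℚ[t,t⁻¹]/(nt²+(1−2n)t+n))², with n = −x²−x−1 and x ≥ 2 an integer, are linearly independent over ℤ. -/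
open LaurentPolynomial

noncomputable def evalAt (u : ℝˣ) : LaurentPolynomial ℚ →ₐ[ℚ] ℝ :=
  AddMonoidAlgebra.lift ℚ ℝ ℤ ((Units.coeHom ℝ).comp (zpowersHom ℝˣ u))

theorem evalAt_T (u : ℝˣ) (k : ℤ) : evalAt u (T k) = (u : ℝ) ^ k := by
  rw [evalAt, T, AddMonoidAlgebra.lift_single]
  simp [zpowersHom]

theorem evalAt_C (u : ℝˣ) (r : ℚ) : evalAt u (C r) = (r : ℝ) := by
  rw [evalAt, ← single_eq_C, AddMonoidAlgebra.lift_single]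
  simp [zpowersHom, Algebra.smul_def]

lemma solve_aux (X N a b c d α β : ℝ)
    (hX2 : 2 ≤ X) (hN : N = -X ^ 2 - X - 1) (hαβ : α ≠ β)
    (e1 : a + c * ((N + X * N + X) * α + 1) + d * ((N + 1) * α - 1) = 0)
    (e2 : a + c * ((N + X * N + X) * β + 1) + d * ((N + 1) * β - 1) = 0)
    (e3 : b + c * ((N + 1) * α - 1) + d * ((-X * N - N - 1) * α + (X + 1)) = 0)
    (e4 : b + c * ((N + 1) * β - 1) + d * ((-X * N - N - 1) * β + (X + 1)) = 0) :
    a = 0 ∧ b = 0 ∧ c = 0 ∧ d = 0 := by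
  have hαβ' : α - β ≠ 0 := sub_ne_zero.mpr hαβ
  have hA : (c * (N + X * N + X) + d * (N + 1)) * (α - β) = 0 := by
    linear_combination e1 - e2
  have hB : (c * (N + 1) + d * (-X * N - N - 1)) * (α - β) = 0 := by
    linear_combination e3 - e4
  have hA' : c * (N + X * N + X) + d * (N + 1) = 0 :=
    (mul_eq_zero.mp hA).resolve_right hαβ'
  have hB' : c * (N + 1) + d * (-X * N - N - 1) = 0 :=
    (mul_eq_zero.mp hB).resolve_right hαβ'
  have hD : (N + X * N + X) * (-X * N - N - 1) - (N + 1) ^ 2 ≠ 0 := by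
    rw [hN]; intro h; nlinarith [h, hX2]
  have hc : c * ((N + X * N + X) * (-X * N - N - 1) - (N + 1) ^ 2) = 0 := by
    linear_combination (-X * N - N - 1) * hA' - (N + 1) * hB'
  have hc0 : c = 0 := (mul_eq_zero.mp hc).resolve_right hD
  have hN1 : N + 1 ≠ 0 := by rw [hN]; intro h; nlinarith
  have hd0 : d = 0 := by
    have : d * (N + 1) = 0 := by linear_combination hA' - (N + X * N + X) * hc0
    exact (mul_eq_zero.mp this).resolve_right hN1
  subst hc0 hd0
  simp only [zero_mul, add_zero] at e1 e3
  exact ⟨e1, e3, rfl, rfl⟩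

lemma root_aux (N s : ℝ) (hN0 : N ≠ 0) (hs : s ^ 2 = 1 - 4 * N) (sg : ℝ) (hsg : sg = s ∨ sg = -s) :
    N * ((2 * N - 1 + sg) / (2 * N)) ^ 2 + (1 - 2 * N) * ((2 * N - 1 + sg) / (2 * N)) + N = 0 := by
  rcases hsg with rfl | rfl <;> (field_simp; ring_nf; nlinarith [hs])

/-- The vectors `m₁ = (1,0)`, `m₂ = (0,1)`,
`l₁ = (t(n+xn+x)+1, t(n+1)-1)`, `l₂ = (t(n+1)-1, t(-xn-n-1)+x+1)`, regarded as
elements of `A = (ℚ[t,t⁻¹]/(n t² + (1-2n) t + n))²` with `n = -x² - x - 1` and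
`x ≥ 2` an integer, are linearly independent over `ℤ`. -/
theorem stmt_13 (x : ℤ) (hx : 2 ≤ x) :
    let n : ℚ := -(x : ℚ) ^ 2 - x - 1
    let q : LaurentPolynomial ℚ := C n * T 2 + C (1 - 2 * n) * T 1 + C n
    let Q := LaurentPolynomial ℚ ⧸ Ideal.span {q}
    let π : LaurentPolynomial ℚ →+* Q := Ideal.Quotient.mk (Ideal.span {q})
    let m₁ : Q × Q := (π 1, π 0)
    let m₂ : Q × Q := (π 0, π 1)
    let l₁ : Q × Q :=
      (π (C (n + x * n + x) * T 1 + 1), π (C (n + 1) * T 1 - 1))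
    let l₂ : Q × Q :=
      (π (C (n + 1) * T 1 - 1), π (C (-x * n - n - 1) * T 1 + C ((x : ℚ) + 1)))
    LinearIndependent ℤ ![m₁, m₂, l₁, l₂] := by
  intro n q Q π m₁ m₂ l₁ l₂
  have hX2 : (2 : ℝ) ≤ (x : ℝ) := by exact_mod_cast hx
  have hN : ((n : ℚ) : ℝ) = -(x : ℝ) ^ 2 - (x : ℝ) - 1 := by simp [n]
  have hN0 : ((n : ℚ) : ℝ) ≠ 0 := by rw [hN]; nlinarith
  have hs0 : (0 : ℝ) < 1 - 4 * ((n : ℚ) : ℝ) := by rw [hN]; nlinarith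
  set s : ℝ := Real.sqrt (1 - 4 * ((n : ℚ) : ℝ)) with hsdef
  have hs : s ^ 2 = 1 - 4 * ((n : ℚ) : ℝ) := Real.sq_sqrt hs0.le
  have hspos : 0 < s := Real.sqrt_pos.mpr hs0
  set α : ℝ := ((2 * ((n : ℚ) : ℝ) - 1) + s) / (2 * ((n : ℚ) : ℝ)) with hα
  set β : ℝ := ((2 * ((n : ℚ) : ℝ) - 1) - s) / (2 * ((n : ℚ) : ℝ)) with hβ
  have hrootα : ((n : ℚ) : ℝ) * α ^ 2 + (1 - 2 * ((n : ℚ) : ℝ)) * α + ((n : ℚ) : ℝ) = 0 := by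
    rw [hα]; exact root_aux _ s hN0 hs s (Or.inl rfl)
  have hrootβ : ((n : ℚ) : ℝ) * β ^ 2 + (1 - 2 * ((n : ℚ) : ℝ)) * β + ((n : ℚ) : ℝ) = 0 := by
    rw [hβ, show 2 * ((n : ℚ) : ℝ) - 1 - s = 2 * ((n : ℚ) : ℝ) - 1 + (-s) by ring]
    exact root_aux _ s hN0 hs (-s) (Or.inr rfl)
  have hαβne : α ≠ β := by
    have hd : α - β = s / ((n : ℚ) : ℝ) := by rw [hα, hβ]; field_simp; ring
    have hd0 : α - β ≠ 0 := by rw [hd]; exact div_ne_zero hspos.ne' hN0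
    exact sub_ne_zero.mp hd0
  have hαne0 : α ≠ 0 := by
    intro h0; rw [h0] at hrootα; simp at hrootα; exact hN0 (by exact_mod_cast hrootα)
  have hβne0 : β ≠ 0 := by
    intro h0; rw [h0] at hrootβ; simp at hrootβ; exact hN0 (by exact_mod_cast hrootβ)
  have mkΦ : ∀ (γ : ℝ) (hγ0 : γ ≠ 0),
      ((n : ℚ) : ℝ) * γ ^ 2 + (1 - 2 * ((n : ℚ) : ℝ)) * γ + ((n : ℚ) : ℝ) = 0 →
      ∃ Φ : Q →+* ℝ, ∀ p : LaurentPolynomial ℚ, Φ (π p) = evalAt (Units.mk0 γ hγ0) p := by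
    intro γ hγ0 hγroot
    have hq0 : evalAt (Units.mk0 γ hγ0) q = 0 := by
      have h2 : ((Units.mk0 γ hγ0 : ℝˣ) : ℝ) ^ (2 : ℤ) = γ ^ 2 := by
        rw [Units.val_mk0, show (2:ℤ) = ((2:ℕ):ℤ) from rfl, zpow_natCast]
      have h1 : ((Units.mk0 γ hγ0 : ℝˣ) : ℝ) ^ (1 : ℤ) = γ := by
        rw [Units.val_mk0, zpow_one]
      show evalAt (Units.mk0 γ hγ0) (C n * T 2 + C (1 - 2 * n) * T 1 + C n) = 0
      rw [map_add, map_add, map_mul, map_mul, evalAt_T, evalAt_T, evalAt_C, evalAt_C, h2, h1]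
      push_cast
      linear_combination hγroot
    refine ⟨Ideal.Quotient.lift (Ideal.span {q}) (evalAt (Units.mk0 γ hγ0)).toRingHom ?_,
      fun p => Ideal.Quotient.lift_mk _ _ _⟩
    intro a ha
    obtain ⟨c, rfl⟩ := Ideal.mem_span_singleton'.mp ha
    simp [map_mul, hq0]
  obtain ⟨Φα, hΦα⟩ := mkΦ α hαne0 hrootα
  obtain ⟨Φβ, hΦβ⟩ := mkΦ β hβne0 hrootβ
  rw [Fintype.linearIndependent_iff]
  intro g hg
  rw [Fin.sum_univ_four] at hg
  simp only [Matrix.cons_val_zero, Matrix.cons_val_one, Matrix.head_cons,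
    Matrix.cons_val_two, Matrix.cons_val_three, Matrix.tail_cons] at hg
  have hg1 := congrArg Prod.fst hg
  have hg2 := congrArg Prod.snd hg
  simp only [Prod.fst_add, Prod.snd_add, Prod.smul_fst, Prod.smul_snd, Prod.fst_zero,
    Prod.snd_zero, m₁, m₂, l₁, l₂] at hg1 hg2
  have E : ∀ (Φ : Q →+* ℝ) (γ : ℝ) (hγ0 : γ ≠ 0),
      (∀ p : LaurentPolynomial ℚ, Φ (π p) = evalAt (Units.mk0 γ hγ0) p) →
      ((g 0 : ℝ) + (g 2 : ℝ) * ((((n : ℚ) : ℝ) + (x : ℝ) * ((n : ℚ) : ℝ) + (x : ℝ)) * γ + 1)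
        + (g 3 : ℝ) * ((((n : ℚ) : ℝ) + 1) * γ - 1) = 0)
      ∧ ((g 1 : ℝ) + (g 2 : ℝ) * ((((n : ℚ) : ℝ) + 1) * γ - 1)
        + (g 3 : ℝ) * ((-(x : ℝ) * ((n : ℚ) : ℝ) - ((n : ℚ) : ℝ) - 1) * γ + ((x : ℝ) + 1)) = 0) := by
    intro Φ γ hγ0 hΦ
    have h1 : ((Units.mk0 γ hγ0 : ℝˣ) : ℝ) ^ (1 : ℤ) = γ := by
      rw [Units.val_mk0, zpow_one]
    constructor
    · have := congrArg Φ hg1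
      simp only [map_add, map_zsmul, map_zero, hΦ, map_one, map_sub, map_mul, map_intCast,
        evalAt_T, evalAt_C, h1, smul_zero, zsmul_eq_mul, mul_one] at this
      linear_combination this
    · have := congrArg Φ hg2
      simp only [map_add, map_zsmul, map_zero, hΦ, map_one, map_sub, map_mul, map_intCast,
        evalAt_T, evalAt_C, h1, smul_zero, zsmul_eq_mul, mul_one] at this
      push_cast at this ⊢
      linear_combination this
  obtain ⟨e1, e3⟩ := E Φα α hαne0 hΦα
  obtain ⟨e2, e4⟩ := E Φβ β hβne0 hΦβ
  have final := solve_aux (x : ℝ) ((n : ℚ) : ℝ) _ _ _ _ α β hX2 hN hαβne e1 e2 e3 e4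
  obtain ⟨f0, f1, f2, f3⟩ := final
  intro i
  fin_cases i
  · exact_mod_cast f0
  · exact_mod_cast f1
  · exact_mod_cast f2
  · exact_mod_cast f3
end
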